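/- One-step recursive feasibility: assume there exists c₁ ∈ (0, c) such that {x : V_f(x) ≤ c₁} ⊆ X_f ⊖ B_{L̄^N η} and V_f(x) − V_f(f^ε(x, μ(x))) ≥ c − c₁ for every x ∈ X_f with V_f(x) ≥ c₁. Let x̂ ∈ S and let u⋆ = (u⋆₀,…,u⋆_{N−1}) be ε-admissible for x̂, with predicted states x⋆(i) := x^ε_{u⋆}(i;x̂). Then the shifted sequence u⁺ := (u⋆₁, …, u⋆_{N−1}, μ(x⋆(N))) is ε-admissible for the plant successor state x⁺ := f(x̂, u⋆₀), i.e., x^ε_{u⁺}(k;x⁺) ∈ S ⊖ B_{c̄(k)η} for k ∈ [1:N−1] and x^ε_{u⁺}(N;x⁺) ∈ X_f. -/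

import Mathlib

noncomputable section

abbrev E (n : ℕ) := EuclideanSpace ℝ (Fin n)

/-- Predicted trajectory of the surrogate model. -/
def traj {n m : ℕ} (fe : E n → E m → E n) (x0 : E n) (u : ℕ → E m) : ℕ → E n
  | 0 => x0
  | k + 1 => fe (traj fe x0 u k) (u k)

/-- Pontryagin set difference `S ⊖ B_r`. -/
def pDiff {n : ℕ} (S : Set (E n)) (r : ℝ) : Set (E n) :=
  {x | ∀ z : E n, ‖z‖ ≤ r → x + z ∈ S}

/-- `c̄(k) = ∑_{i=0}^{k-1} L̄^i`. -/
def cbar (Lbar : ℝ) (k : ℕ) : ℝ := ∑ i ∈ Finset.range k, Lbar ^ i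

/-- Quadratic form `xᵀQx` on Euclidean space. -/
def qf {n : ℕ} (Q : Matrix (Fin n) (Fin n) ℝ) (x : E n) : ℝ :=
  dotProduct (WithLp.equiv 2 (Fin n → ℝ) x) (Q.mulVec (WithLp.equiv 2 (Fin n → ℝ) x))

/-- ε-admissibility of an input sequence `u` for initial state `xh`. -/
def Admissible {n m : ℕ} (fe : E n → E m → E n) (S Xf : Set (E n)) (U : Set (E m))
    (η Lbar : ℝ) (N : ℕ) (xh : E n) (u : ℕ → E m) : Prop :=
  (∀ k < N, u k ∈ U) ∧
  (∀ k, 1 ≤ k → k < N → traj fe xh u k ∈ pDiff S (cbar Lbar k * η)) ∧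
  traj fe xh u N ∈ Xf

/-- MPC cost functional. -/
def JN {n m M : ℕ} (fe : E n → E m → E n) (Q : Matrix (Fin n) (Fin n) ℝ)
    (R : Matrix (Fin m) (Fin m) ℝ) (P : Matrix (Fin M) (Fin M) ℝ) (Φ : E n → E M)
    (N : ℕ) (xh : E n) (u : ℕ → E m) : ℝ :=
  ∑ i ∈ Finset.range N, (qf Q (traj fe xh u i) + qf R (u i)) + qf P (Φ (traj fe xh u N))

/-- Optimal value function. -/
def VN {n m M : ℕ} (fe : E n → E m → E n) (S Xf : Set (E n)) (U : Set (E m))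
    (η Lbar : ℝ) (Q : Matrix (Fin n) (Fin n) ℝ) (R : Matrix (Fin m) (Fin m) ℝ)
    (P : Matrix (Fin M) (Fin M) ℝ) (Φ : E n → E M) (N : ℕ) (xh : E n) : ℝ :=
  sInf (JN fe Q R P Φ N xh '' {u | Admissible fe S Xf U η Lbar N xh u})


/-- One-step recursive feasibility. -/
theorem one_step_recursive_feasibility
    {n m M : ℕ} (S : Set (E n)) (U : Set (E m))
    (hScomp : IsCompact S) (hSconv : Convex ℝ S) (hS0 : (0 : E n) ∈ interior S)
    (hUcomp : IsCompact U) (hUconv : Convex ℝ U) (hU0 : (0 : E m) ∈ interior U)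
    (f fe : E n → E m → E n) (hf00 : f 0 0 = 0)
    (cx cu η : ℝ) (hcx : 0 ≤ cx) (hcu : 0 ≤ cu) (hη : 0 ≤ η)
    (herr : ∀ x ∈ S, ∀ u ∈ U, ‖f x u - fe x u‖ ≤ min (cx * ‖x‖ + cu * ‖u‖) η)
    (Lbar : ℝ) (hL : 1 ≤ Lbar)
    (hLip : ∀ u ∈ U, ∀ x ∈ S, ∀ y ∈ S, ‖fe x u - fe y u‖ ≤ Lbar * ‖x - y‖)
    (Q : Matrix (Fin n) (Fin n) ℝ) (R : Matrix (Fin m) (Fin m) ℝ)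
    (hQ : Q.PosDef) (hR : R.PosDef)
    (P : Matrix (Fin M) (Fin M) ℝ) (hP : P.PosDef)
    (Φ : E n → E M) (LΦ : ℝ) (hΦ : ∀ x y, ‖Φ x - Φ y‖ ≤ LΦ * ‖x - y‖) (hΦ0 : Φ 0 = 0)
    (c : ℝ) (hc : 0 < c) (N : ℕ) (hN : 1 ≤ N)
    (Xf : Set (E n)) (hXf : Xf = {x | qf P (Φ x) ≤ c})
    (hXfS : Xf ⊆ pDiff S (cbar Lbar N * η))
    (μ : E n → E m) (hμ0 : μ 0 = 0) (hμU : ∀ x ∈ Xf, μ x ∈ U)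
    (hμdec : ∀ x ∈ Xf,
      qf P (Φ (fe x (μ x))) - qf P (Φ x) ≤ -(qf Q x + qf R (μ x)))
    -- Assumption (iii): uniform decrease margin with sublevel set inside the
    -- tightened terminal set
    (hc₁ : ∃ c₁, 0 < c₁ ∧ c₁ < c ∧
      {x | qf P (Φ x) ≤ c₁} ⊆ pDiff Xf (Lbar ^ N * η) ∧
      ∀ x ∈ Xf, c₁ ≤ qf P (Φ x) →
        c - c₁ ≤ qf P (Φ x) - qf P (Φ (fe x (μ x))))
    (xh : E n) (hxh : xh ∈ S) (ustar : ℕ → E m)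
    (hadm : Admissible fe S Xf U η Lbar N xh ustar) :
    Admissible fe S Xf U η Lbar N (f xh (ustar 0))
      (fun k => if k + 1 < N then ustar (k + 1) else μ (traj fe xh ustar N)) := by
  obtain ⟨c₁, hc₁0, hc₁c, hsub, hdecmarg⟩ := hc₁
  obtain ⟨hU', hS', hT'⟩ := hadm
  have hLpos : (0:ℝ) ≤ Lbar := le_trans zero_le_one hL
  have hpow_nonneg : ∀ k : ℕ, (0:ℝ) ≤ Lbar ^ k := fun k => pow_nonneg hLpos k
  have hcbar_nonneg : ∀ k : ℕ, 0 ≤ cbar Lbar k := by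
    intro k
    exact Finset.sum_nonneg fun i _ => hpow_nonneg i
  have hcbar_succ : ∀ k : ℕ, cbar Lbar (k+1) = cbar Lbar k + Lbar ^ k := by
    intro k; exact Finset.sum_range_succ _ k
  have hpow_le : ∀ k : ℕ, Lbar ^ k ≤ cbar Lbar (k+1) := by
    intro k; rw [hcbar_succ k]; nlinarith [hcbar_nonneg k]
  -- all predicted states x⋆(j), 1 ≤ j ≤ N, are in the tightened sets
  have hstar : ∀ j, 1 ≤ j → j ≤ N → traj fe xh ustar j ∈ pDiff S (cbar Lbar j * η) := by
    intro j h1 h2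
    rcases lt_or_eq_of_le h2 with h | h
    · exact hS' j h1 h
    · subst h; exact hXfS hT'
  have hstarS : ∀ j, 1 ≤ j → j ≤ N → traj fe xh ustar j ∈ S := by
    intro j h1 h2
    have := hstar j h1 h2 0 (by simp [mul_nonneg (hcbar_nonneg j) hη])
    simpa using this
  set up : ℕ → E m := fun k => if k + 1 < N then ustar (k + 1) else μ (traj fe xh ustar N)
    with hup
  have hupU : ∀ k < N, up k ∈ U := by
    intro k hk
    by_cases h : k + 1 < N
    · simpa [hup, h] using hU' (k+1) h
    · simpa [hup, h] using hμU _ hT'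
  set y : ℕ → E n := traj fe (f xh (ustar 0)) up with hy
  -- key estimate by induction
  have key : ∀ k, k + 1 ≤ N →
      ‖y k - traj fe xh ustar (k+1)‖ ≤ Lbar ^ k * η ∧ y k ∈ S := by
    intro k
    induction k with
    | zero =>
      intro _
      have h0 : ‖y 0 - traj fe xh ustar 1‖ ≤ η := by
        have := herr xh hxh (ustar 0) (hU' 0 (by omega))
        have h2 : ‖f xh (ustar 0) - fe xh (ustar 0)‖ ≤ η := le_trans this (min_le_right _ _)
        simpa [hy, traj] using h2
      refine ⟨by simpa using h0, ?_⟩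
      have hmem := hstar 1 le_rfl hN (y 0 - traj fe xh ustar 1) ?_
      · simpa using hmem
      · calc ‖y 0 - traj fe xh ustar 1‖ ≤ η := h0
          _ = 1 * η := (one_mul η).symm
          _ ≤ cbar Lbar 1 * η := by
              apply mul_le_mul_of_nonneg_right _ hη
              simpa using hpow_le 0
    | succ k ih =>
      intro hk1
      have hk : k + 1 ≤ N := by omega
      obtain ⟨ihd, ihS⟩ := ih hk
      have hupk : up k = ustar (k+1) := by simp [hup, show k + 1 < N by omega]
      have hxsS : traj fe xh ustar (k+1) ∈ S := hstarS (k+1) (by omega) hk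
      have hlip := hLip (ustar (k+1)) (hU' (k+1) (by omega)) (y k) ihS
        (traj fe xh ustar (k+1)) hxsS
      have hstep : ‖y (k+1) - traj fe xh ustar (k+2)‖ ≤ Lbar ^ (k+1) * η := by
        have h1 : y (k+1) = fe (y k) (ustar (k+1)) := by
          simp [hy, traj, hupk]
        have h2 : traj fe xh ustar (k+2) = fe (traj fe xh ustar (k+1)) (ustar (k+1)) := rfl
        rw [h1, h2]
        calc ‖fe (y k) (ustar (k+1)) - fe (traj fe xh ustar (k+1)) (ustar (k+1))‖
            ≤ Lbar * ‖y k - traj fe xh ustar (k+1)‖ := hlip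
          _ ≤ Lbar * (Lbar ^ k * η) := by
              exact mul_le_mul_of_nonneg_left ihd hLpos
          _ = Lbar ^ (k+1) * η := by ring
      refine ⟨hstep, ?_⟩
      have hmem := hstar (k+2) (by omega) (by omega)
        (y (k+1) - traj fe xh ustar (k+2)) ?_
      · simpa using hmem
      · calc ‖y (k+1) - traj fe xh ustar (k+2)‖ ≤ Lbar ^ (k+1) * η := hstep
          _ ≤ cbar Lbar (k+2) * η := mul_le_mul_of_nonneg_right (hpow_le (k+1)) hη
  refine ⟨hupU, ?_, ?_⟩
  · -- state constraints for k ∈ [1, N-1]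
    intro k hk1 hkN
    obtain ⟨hd, _⟩ := key k (by omega)
    intro z hz
    have hmem := hstar (k+1) (by omega) (by omega)
      ((y k - traj fe xh ustar (k+1)) + z) ?_
    · have : traj fe xh ustar (k+1) + ((y k - traj fe xh ustar (k+1)) + z)
          = y k + z := by abel
      rw [this] at hmem
      exact hmem
    · calc ‖(y k - traj fe xh ustar (k+1)) + z‖
          ≤ ‖y k - traj fe xh ustar (k+1)‖ + ‖z‖ := norm_add_le _ _
        _ ≤ Lbar ^ k * η + cbar Lbar k * η := add_le_add hd hz
        _ = cbar Lbar (k+1) * η := by rw [hcbar_succ k]; ring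
  · -- terminal constraint
    obtain ⟨K, hK⟩ : ∃ K, N = K + 1 := ⟨N - 1, by omega⟩
    obtain ⟨hd, hyS⟩ := key K (by omega)
    have hupK : up K = μ (traj fe xh ustar N) := by
      simp [hup, show ¬ (K + 1 < N) by omega]
    set xN := traj fe xh ustar N with hxN
    have hxNS : xN ∈ S := hstarS N hN le_rfl
    have hyN : y N = fe (y K) (μ xN) := by
      rw [hK]; simp [hy, traj, hupK, hxN]
    set x' := fe xN (μ xN) with hx'
    have hdist : ‖y N - x'‖ ≤ Lbar ^ N * η := by
      rw [hyN, hx']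
      calc ‖fe (y K) (μ xN) - fe xN (μ xN)‖
          ≤ Lbar * ‖y K - xN‖ := hLip (μ xN) (hμU _ hT') (y K) hyS xN hxNS
        _ ≤ Lbar * (Lbar ^ K * η) := by
            apply mul_le_mul_of_nonneg_left _ hLpos
            rw [hK] at hxN
            rw [hxN]
            exact hd
        _ = Lbar ^ N * η := by rw [hK]; ring
    -- V_f(x') ≤ c₁
    have hvc : qf P (Φ xN) ≤ c := by
      have := hT'
      rw [hXf] at this
      exact this
    have hx'c₁ : qf P (Φ x') ≤ c₁ := by
      by_cases hcase : c₁ ≤ qf P (Φ xN)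
      · have := hdecmarg xN hT' hcase
        linarith
      · have hdec := hμdec xN hT'
        have hQnn : 0 ≤ qf Q xN := by
          have := hQ.posSemidef.dotProduct_mulVec_nonneg (WithLp.equiv 2 (Fin n → ℝ) xN)
          simpa [qf] using this
        have hRnn : 0 ≤ qf R (μ xN) := by
          have := hR.posSemidef.dotProduct_mulVec_nonneg (WithLp.equiv 2 (Fin m → ℝ) (μ xN))
          simpa [qf] using this
        push_neg at hcase
        linarith
    have hmem := hsub hx'c₁ (y N - x') hdist
    have : x' + (y N - x') = y N := by abel
    rw [this] at hmem
    exact hmem
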